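/- Let T be a triangulation of P_{n+2}. The vectors v_1,…,v_n form a ℤ-basis of the lattice N = ℤ^{n+1}/ℤ(1,…,1), and likewise the vectors w_1,…,w_n form a ℤ-basis of N. -/

import Mathlib

/-- A triangulation of the convex `(n+2)`-gon with vertices `0, 1, …, n+1` labelled
counterclockwise, encoded as the finite set of its `2n+1` edges `(a,b)` with `a < b`. -/
def IsTriangulation (n : ℕ) (T : Finset (ℕ × ℕ)) : Prop :=
  (∀ e ∈ T, e.1 < e.2 ∧ e.2 ≤ n + 1) ∧
  (∀ i, i ≤ n → (i, i + 1) ∈ T) ∧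
  (0, n + 1) ∈ T ∧
  T.card = 2 * n + 1 ∧
  ∀ e ∈ T, ∀ f ∈ T, ¬(e.1 < f.1 ∧ f.1 < e.2 ∧ e.2 < f.2)

/-- `kL k < k < kR k` is the (unique) triangle of `T` with middle vertex `k`,
for each `k ∈ {1,…,n}`. -/
def MidTriangle (n : ℕ) (T : Finset (ℕ × ℕ)) (kL kR : ℕ → ℕ) : Prop :=
  ∀ k, 1 ≤ k → k ≤ n → kL k < k ∧ k < kR k ∧
    (kL k, k) ∈ T ∧ (k, kR k) ∈ T ∧ (kL k, kR k) ∈ T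

/-- The lattice `N = ℤ^{n+1}/ℤ(1,…,1)`. -/
abbrev Nlat (n : ℕ) : Type :=
  (Fin (n + 1) → ℤ) ⧸ (Submodule.span ℤ ({fun _ => 1} : Set (Fin (n + 1) → ℤ)))

/-- `ϖ_i ∈ N`, the image of `e_1 + ⋯ + e_i` (so `ϖ_0 = ϖ_{n+1} = 0`). -/
def varpi (n : ℕ) (i : ℕ) : Nlat n :=
  Submodule.Quotient.mk (fun x => if (x : ℕ) + 1 ≤ i then 1 else 0)

/-- `v_k = ϖ_k − ϖ_{k_R} ∈ N`. -/
noncomputable def vVec (n : ℕ) (kR : ℕ → ℕ) (k : ℕ) : Nlat n := varpi n k - varpi n (kR k)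

/-- `w_k = ϖ_{k_L} − ϖ_k ∈ N`. -/
noncomputable def wVec (n : ℕ) (kL : ℕ → ℕ) (k : ℕ) : Nlat n := varpi n (kL k) - varpi n k

/-- The vectors `v_1,…,v_n` form a ℤ-basis of `N = ℤ^{n+1}/ℤ(1,…,1)`, and likewise
`w_1,…,w_n` form a ℤ-basis of `N`. -/
lemma varpi_zero (n : ℕ) : varpi n 0 = 0 := by
  unfold varpi
  have h : (fun x : Fin (n+1) => if (x : ℕ) + 1 ≤ 0 then (1:ℤ) else 0) = 0 := by
    funext x; simp
  rw [h, Submodule.Quotient.mk_zero]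

lemma varpi_top (n : ℕ) : varpi n (n+1) = 0 := by
  unfold varpi
  rw [Submodule.Quotient.mk_eq_zero]
  have h : (fun x : Fin (n+1) => if (x : ℕ) + 1 ≤ n+1 then (1:ℤ) else 0)
      = fun _ => (1:ℤ) := by
    funext x; rw [if_pos (by omega)]
  rw [h]
  exact Submodule.mem_span_singleton_self _

/-- The "consecutive differences" map, killing constants. -/
def Dmap (n : ℕ) : (Fin (n+1) → ℤ) →ₗ[ℤ] (Fin n → ℤ) :=
  LinearMap.pi fun j => (LinearMap.proj j.castSucc : (Fin (n+1) → ℤ) →ₗ[ℤ] ℤ) - (LinearMap.proj j.succ : (Fin (n+1) → ℤ) →ₗ[ℤ] ℤ)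

def Dbar (n : ℕ) : Nlat n →ₗ[ℤ] (Fin n → ℤ) :=
  Submodule.liftQ _ (Dmap n) (by
    rw [Submodule.span_le, Set.singleton_subset_iff]
    show (fun _ => (1:ℤ)) ∈ (LinearMap.ker (Dmap n) : Set (Fin (n+1) → ℤ))
    rw [SetLike.mem_coe, LinearMap.mem_ker]
    funext j
    simp [Dmap])

lemma Dbar_varpi (n : ℕ) (j : Fin n) :
    Dbar n (varpi n ((j : ℕ) + 1)) = Pi.single j 1 := by
  have : Dbar n (varpi n ((j : ℕ) + 1))
      = Dmap n (fun x => if (x : ℕ) + 1 ≤ (j : ℕ) + 1 then 1 else 0) :=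
    Submodule.liftQ_apply _ _ _
  rw [this]
  funext i
  have hs : (Pi.single j 1 : Fin n → ℤ) i = if i = j then 1 else 0 := by
    rw [Pi.single_apply]
  rw [hs]
  simp only [Dmap, LinearMap.pi_apply, LinearMap.sub_apply, LinearMap.proj_apply,
    Fin.coe_castSucc, Fin.val_succ]
  have hij : (i = j) ↔ ((i:ℕ) = (j:ℕ)) := Fin.ext_iff
  split_ifs with h1 h2 h3 h2 h3 <;> simp_all <;> omega

lemma F_indep (n : ℕ) :
    LinearIndependent ℤ (fun j : Fin n => varpi n ((j : ℕ) + 1)) := by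
  apply LinearIndependent.of_comp (Dbar n)
  have h : (⇑(Dbar n) ∘ fun j : Fin n => varpi n ((j : ℕ) + 1))
      = ⇑(Pi.basisFun ℤ (Fin n)) := by
    funext j
    exact (Dbar_varpi n j).trans (Pi.basisFun_apply ℤ (Fin n) j).symm
  rw [h]
  exact (Pi.basisFun ℤ (Fin n)).linearIndependent

lemma single_mem_span (n : ℕ) (i : Fin (n+1)) :
    (Submodule.Quotient.mk (Pi.single i 1) : Nlat n) ∈
      Submodule.span ℤ (Set.range fun j : Fin n => varpi n ((j : ℕ) + 1)) := by
  have hmk : (Submodule.Quotient.mk (Pi.single i 1) : Nlat n)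
      = varpi n ((i : ℕ) + 1) - varpi n (i : ℕ) := by
    unfold varpi
    rw [← Submodule.Quotient.mk_sub]
    congr 1
    funext x
    have hx : (Pi.single i 1 : Fin (n+1) → ℤ) x = if x = i then 1 else 0 := by
      rw [Pi.single_apply]
    rw [hx]
    simp only [Pi.sub_apply]
    have hxi : (x = i) ↔ ((x:ℕ) = (i:ℕ)) := Fin.ext_iff
    split_ifs <;> simp_all <;> omega
  rw [hmk]
  have h1 : varpi n ((i : ℕ) + 1) ∈
      Submodule.span ℤ (Set.range fun j : Fin n => varpi n ((j : ℕ) + 1)) := by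
    rcases lt_or_eq_of_le (Nat.lt_succ_iff.mp i.isLt) with h | h
    · exact Submodule.subset_span ⟨⟨(i:ℕ), h⟩, rfl⟩
    · rw [h, varpi_top]; exact zero_mem _
  have h2 : varpi n (i : ℕ) ∈
      Submodule.span ℤ (Set.range fun j : Fin n => varpi n ((j : ℕ) + 1)) := by
    rcases Nat.eq_zero_or_pos (i : ℕ) with h | h
    · rw [h, varpi_zero]; exact zero_mem _
    · refine Submodule.subset_span ⟨⟨(i:ℕ) - 1, by omega⟩, ?_⟩
      show varpi n (((i:ℕ) - 1) + 1) = _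
      congr 1; omega
  exact sub_mem h1 h2

lemma F_span (n : ℕ) :
    Submodule.span ℤ (Set.range fun j : Fin n => varpi n ((j : ℕ) + 1)) = ⊤ := by
  rw [eq_top_iff]
  rintro x -
  obtain ⟨f, rfl⟩ := Submodule.Quotient.mk_surjective _ x
  have hf : f = ∑ i : Fin (n+1), f i • (Pi.single i 1 : Fin (n+1) → ℤ) := by
    funext x
    simp [Finset.sum_apply, Pi.single_apply]
  have hmk : (Submodule.Quotient.mk f : Nlat n)
      = ∑ i : Fin (n+1), f i • (Submodule.Quotient.mk (Pi.single i 1) : Nlat n) := by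
    conv_lhs => rw [hf]
    rw [← Submodule.mkQ_apply, map_sum]
    simp only [map_smul, Submodule.mkQ_apply]
  rw [hmk]
  exact Submodule.sum_mem _ fun i _ => Submodule.smul_mem _ _ (single_mem_span n i)

noncomputable def Bbasis (n : ℕ) : Module.Basis (Fin n) ℤ (Nlat n) :=
  Module.Basis.mk (F_indep n) (F_span n).ge

lemma Bbasis_repr (n : ℕ) (m : ℕ) (hm : m ≤ n + 1) (i : Fin n) :
    (Bbasis n).repr (varpi n m) i = if (i : ℕ) + 1 = m then 1 else 0 := by
  rcases Nat.eq_zero_or_pos m with rfl | h1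
  · rw [varpi_zero, map_zero]
    rw [if_neg (by omega)]; rfl
  rcases eq_or_lt_of_le hm with rfl | hlt
  · rw [varpi_top, map_zero, if_neg (by omega)]; rfl
  · have hmn : m ≤ n := by omega
    have hv : varpi n m = Bbasis n ⟨m - 1, by omega⟩ := by
      rw [Bbasis, Module.Basis.mk_apply]
      congr 1
      simp only [Fin.val_mk]
      omega
    rw [hv, Module.Basis.repr_self, Finsupp.single_apply]
    by_cases hc : (i : ℕ) + 1 = m
    · rw [if_pos hc, if_pos (Fin.ext (by simp only [Fin.val_mk]; omega))]
    · rw [if_neg hc, if_neg (fun he => hc (by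
        have := Fin.ext_iff.mp he
        simp only [Fin.val_mk] at this; omega))]

theorem stmt4 (n : ℕ) (hn : 1 ≤ n) (T : Finset (ℕ × ℕ)) (hT : IsTriangulation n T)
    (kL kR : ℕ → ℕ) (hmid : MidTriangle n T kL kR) :
    (LinearIndependent ℤ (fun k : Fin n => vVec n kR ((k : ℕ) + 1)) ∧
      Submodule.span ℤ (Set.range fun k : Fin n => vVec n kR ((k : ℕ) + 1)) = ⊤) ∧
    (LinearIndependent ℤ (fun k : Fin n => wVec n kL ((k : ℕ) + 1)) ∧
      Submodule.span ℤ (Set.range fun k : Fin n => wVec n kL ((k : ℕ) + 1)) = ⊤) := by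
  have hT1 := hT.1
  constructor
  · rw [Module.Basis.is_basis_iff_det (Bbasis n), Module.Basis.det_apply]
    set A := (Bbasis n).toMatrix (fun k : Fin n => vVec n kR ((k : ℕ) + 1)) with hA
    have hmid' : ∀ j : Fin n, (j:ℕ)+1 < kR ((j:ℕ)+1) ∧ kR ((j:ℕ)+1) ≤ n+1 := by
      intro j
      obtain ⟨_, h2, _, hmem, _⟩ := hmid ((j:ℕ)+1) (by omega) (by omega)
      exact ⟨h2, (hT1 _ hmem).2⟩
    have hAe : ∀ i j : Fin n, A i j =
        (if (i:ℕ)+1 = (j:ℕ)+1 then 1 else 0)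
          - (if (i:ℕ)+1 = kR ((j:ℕ)+1) then 1 else 0) := by
      intro i j
      rw [hA, Module.Basis.toMatrix_apply]
      show (Bbasis n).repr (varpi n ((j:ℕ)+1) - varpi n (kR ((j:ℕ)+1))) i = _
      rw [map_sub, Finsupp.sub_apply, Bbasis_repr n _ (by omega) i,
        Bbasis_repr n _ (hmid' j).2 i]
    have htri : A.BlockTriangular OrderDual.toDual := by
      intro i j hij
      have hij' : (i:ℕ) < (j:ℕ) := hij
      rw [hAe i j, if_neg (by omega), if_neg (by have := (hmid' j).1; omega)]
      ring
    rw [Matrix.det_of_lowerTriangular A htri]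
    have hdiag : ∀ j : Fin n, A j j = 1 := by
      intro j
      rw [hAe j j, if_pos rfl, if_neg (by have := (hmid' j).1; omega)]
      ring
    rw [Finset.prod_congr rfl (fun j _ => hdiag j), Finset.prod_const_one]
    exact isUnit_one
  · rw [Module.Basis.is_basis_iff_det (Bbasis n), Module.Basis.det_apply]
    set A := (Bbasis n).toMatrix (fun k : Fin n => wVec n kL ((k : ℕ) + 1)) with hA
    have hmid' : ∀ j : Fin n, kL ((j:ℕ)+1) < (j:ℕ)+1 := by
      intro j
      exact (hmid ((j:ℕ)+1) (by omega) (by omega)).1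
    have hAe : ∀ i j : Fin n, A i j =
        (if (i:ℕ)+1 = kL ((j:ℕ)+1) then 1 else 0)
          - (if (i:ℕ)+1 = (j:ℕ)+1 then 1 else 0) := by
      intro i j
      rw [hA, Module.Basis.toMatrix_apply]
      show (Bbasis n).repr (varpi n (kL ((j:ℕ)+1)) - varpi n ((j:ℕ)+1)) i = _
      rw [map_sub, Finsupp.sub_apply,
        Bbasis_repr n _ (by have := hmid' j; omega) i, Bbasis_repr n _ (by omega) i]
    have htri : A.BlockTriangular id := by
      intro i j hij
      have hij' : (j:ℕ) < (i:ℕ) := hij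
      rw [hAe i j, if_neg (by have := hmid' j; omega), if_neg (by omega)]
      ring
    rw [Matrix.det_of_upperTriangular htri]
    have hdiag : ∀ j : Fin n, A j j = -1 := by
      intro j
      rw [hAe j j, if_neg (by have := hmid' j; omega), if_pos rfl]
      ring
    rw [Finset.prod_congr rfl (fun j _ => hdiag j), Finset.prod_const,
      Finset.card_univ, Fintype.card_fin]
    exact (isUnit_one.neg).pow n
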